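/- Let a, c, k > 0 and suppose e : ℝ_{≥0} → ℝ is differentiable with e'(t) = -(k + a·δ(t))·e(t) + a·r(t)·δ(t), where |δ(t)| ≤ Δ for all t, |r(t)| ≤ R* for all t, and k ≥ aΔ + k' with k' > 0. Then d/dt (e(t)²) ≤ -2k'·e(t)² + 2aR*Δ·|e(t)| for all t ≥ 0, and consequently limsup_{t→∞} |e(t)| ≤ (aR*Δ)/k'. -/

import Mathlib

/-- If `V` has derivative `V'` everywhere and `V' t ≤ -c < 0` whenever `V t ≥ B`,
then eventually `V t ≤ B`. -/
lemma aux_eventually_le (V V' : ℝ → ℝ) (hV : ∀ t, HasDerivAt V (V' t) t)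
    (B cc : ℝ) (hcc : 0 < cc) (hd : ∀ t, B ≤ V t → V' t ≤ -cc) :
    ∀ᶠ t in Filter.atTop, V t ≤ B := by
  have hdiff : Differentiable ℝ V := fun t => (hV t).differentiableAt
  have hcont : Continuous V := hdiff.continuous
  -- invariance
  have hinv : ∀ s t : ℝ, s ≤ t → V s ≤ B → V t ≤ B := by
    intro s t hst hVs
    by_contra hVt
    push_neg at hVt
    set S : Set ℝ := Set.Icc s t ∩ {u | V u ≤ B} with hS
    have hSne : S.Nonempty := ⟨s, ⟨le_rfl, hst⟩, hVs⟩
    have hScl : IsClosed S := (isClosed_Icc).inter (isClosed_le hcont continuous_const)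
    have hScpt : IsCompact S := isCompact_Icc.inter_right (isClosed_le hcont continuous_const)
    set m := sSup S with hm
    have hmS : m ∈ S := hScpt.sSup_mem hSne
    have hmt : m ≤ t := hmS.1.2
    have hVm : V m ≤ B := hmS.2
    have hmlt : m < t := hmt.lt_of_ne (fun hEq => by rw [hEq] at hVm; linarith)
    have hanti : AntitoneOn V (Set.Icc m t) := by
      apply antitoneOn_of_deriv_nonpos (convex_Icc m t) hcont.continuousOn
      · exact fun x _ => (hV x).differentiableAt.differentiableWithinAt
      · intro x hx
        rw [interior_Icc] at hx
        have hxS : x ∉ S := fun hxmem => absurd (le_csSup hScpt.bddAbove hxmem) (not_le.2 hx.1)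
        have hxIcc : x ∈ Set.Icc s t := ⟨le_trans hmS.1.1 hx.1.le, hx.2.le⟩
        have : B ≤ V x := le_of_not_ge (fun h => hxS ⟨hxIcc, h⟩)
        rw [(hV x).deriv]
        linarith [hd x this]
    have := hanti (Set.left_mem_Icc.2 hmt) (Set.right_mem_Icc.2 hmt) hmt
    linarith
  -- reach
  have hreach : ∃ T, V T ≤ B := by
    by_contra h
    push_neg at h
    have hg : ∀ x : ℝ, HasDerivAt (fun u => V u + cc * u) (V' x + cc) x := by
      intro x
      have h1 : HasDerivAt (fun u : ℝ => cc * u) cc x := by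
        simpa using (hasDerivAt_id x).const_mul cc
      exact (hV x).add h1
    have key : ∀ X : ℝ, 0 ≤ X → V X + cc * X ≤ V 0 := by
      intro X hX0
      have hanti : AntitoneOn (fun u => V u + cc * u) (Set.Icc 0 X) := by
        apply antitoneOn_of_deriv_nonpos (convex_Icc 0 X)
        · exact (hcont.add (continuous_const.mul continuous_id)).continuousOn
        · exact fun x _ => (hg x).differentiableAt.differentiableWithinAt
        · intro x _
          rw [(hg x).deriv]
          have := hd x (h x).le
          linarith
      have := hanti (Set.left_mem_Icc.2 hX0) (Set.right_mem_Icc.2 hX0) hX0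
      simpa using this
    have hd0 : 0 < (V 0 - B) / cc := div_pos (by linarith [h 0]) hcc
    have hkey := key ((V 0 - B) / cc + 1) (by linarith)
    have hcX : cc * ((V 0 - B) / cc + 1) = V 0 - B + cc := by
      field_simp
    linarith [h ((V 0 - B) / cc + 1)]
  obtain ⟨T, hT⟩ := hreach
  filter_upwards [Filter.eventually_ge_atTop T] with t ht
  exact hinv T t ht hT

theorem stmt11 (a c k k' Δ Rs : ℝ) (ha : 0 < a) (hc : 0 < c) (hkpos : 0 < k)
    (hk' : 0 < k') (hΔ : 0 ≤ Δ) (hRs : 0 ≤ Rs) (hk : a * Δ + k' ≤ k)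
    (e δ r : ℝ → ℝ)
    (hδ : ∀ t : ℝ, |δ t| ≤ Δ) (hr : ∀ t : ℝ, |r t| ≤ Rs)
    (he : ∀ t : ℝ, HasDerivAt e (-(k + a * δ t) * e t + a * r t * δ t) t) :
    (∀ t : ℝ, 0 ≤ t →
      deriv (fun s => e s ^ 2) t ≤ -2 * k' * e t ^ 2 + 2 * a * Rs * Δ * |e t|) ∧
    Filter.limsup (fun t => |e t|) Filter.atTop ≤ a * Rs * Δ / k' := by
  set M : ℝ := a * Rs * Δ / k' with hM
  have hM0 : 0 ≤ M := div_nonneg (by positivity) hk'.le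
  have hkM : k' * M = a * Rs * Δ := by rw [hM]; field_simp
  -- key pointwise bound on the derivative of e²
  have hVderiv : ∀ t, HasDerivAt (fun s => e s ^ 2)
      (2 * e t * (-(k + a * δ t) * e t + a * r t * δ t)) t := by
    intro t
    have := (he t).pow 2
    simpa [Pi.pow_def, mul_comm, mul_assoc, mul_left_comm] using this
  have hbound : ∀ t : ℝ,
      2 * e t * (-(k + a * δ t) * e t + a * r t * δ t)
        ≤ -2 * k' * e t ^ 2 + 2 * a * Rs * Δ * |e t| := by
    intro t
    have hδ1 := hδ t
    have hr1 := hr t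
    have habs : |δ t| ≤ Δ := hδ1
    have h1 : k' ≤ k + a * δ t := by
      have : -Δ ≤ δ t := neg_le_of_abs_le habs
      nlinarith
    have h2 : a * r t * δ t * e t ≤ a * Rs * Δ * |e t| := by
      have : |a * r t * δ t * e t| ≤ a * Rs * Δ * |e t| := by
        rw [abs_mul, abs_mul, abs_mul, abs_of_pos ha]
        have h3 : 0 ≤ a * |r t| := by positivity
        have h4 : |r t| * |δ t| ≤ Rs * Δ := by
          exact mul_le_mul hr1 habs (abs_nonneg _) hRs
        have h5 : a * (|r t| * |δ t|) ≤ a * (Rs * Δ) :=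
          mul_le_mul_of_nonneg_left h4 ha.le
        nlinarith [abs_nonneg (e t)]
      linarith [le_abs_self (a * r t * δ t * e t)]
    nlinarith [sq_nonneg (e t), sq_abs (e t)]
  constructor
  · intro t _
    rw [(hVderiv t).deriv]
    exact hbound t
  · -- limsup part
    have key : ∀ ε : ℝ, 0 < ε →
        Filter.limsup (fun t => |e t|) Filter.atTop ≤ M + ε := by
      intro ε hε
      have hMε : 0 < M + ε := by linarith
      have hev : ∀ᶠ t in Filter.atTop, e t ^ 2 ≤ (M + ε) ^ 2 := by
        apply aux_eventually_le (fun s => e s ^ 2)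
          (fun t => 2 * e t * (-(k + a * δ t) * e t + a * r t * δ t)) hVderiv
          ((M + ε) ^ 2) (2 * (M + ε) * (k' * ε)) (by positivity)
        intro t hVt
        have habs : M + ε ≤ |e t| := by
          nlinarith [sq_abs (e t), abs_nonneg (e t)]
        have hb := hbound t
        have h1 : ε ≤ |e t| - M := by linarith
        have h2 : (M + ε) * ε ≤ |e t| * (|e t| - M) :=
          mul_le_mul habs h1 hε.le (abs_nonneg _)
        nlinarith [sq_abs (e t), hk', h2, hb]
      have hev2 : ∀ᶠ t in Filter.atTop, |e t| ≤ M + ε := by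
        filter_upwards [hev] with t ht
        nlinarith [abs_nonneg (e t), sq_abs (e t)]
      exact Filter.limsup_le_of_le
        (Filter.isCoboundedUnder_le_of_le Filter.atTop (fun t => abs_nonneg (e t))) hev2
    have := le_of_forall_pos_le_add (fun ε hε => key ε hε)
    simpa [hM] using this
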